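/- For n ∈ ℕ₀, the limit as z → -n of ψ'(z)/Γ(z)² equals (n!)², where ψ is the digamma function and Γ the Gamma function. -/

import Mathlib

open Filter Topology

/-- The digamma function ψ = Γ'/Γ on ℂ. -/
noncomputable def digamma (z : ℂ) : ℂ := deriv Complex.Gamma z / Complex.Gamma z

namespace TrigammaAux

noncomputable def F : ℂ → ℂ := fun z => (Complex.Gamma z)⁻¹

lemma hF : Differentiable ℂ F := Complex.differentiable_one_div_Gamma

lemma hFa : AnalyticOnNhd ℂ F Set.univ := Complex.analyticOnNhd_univ_iff_differentiable.2 hF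

lemma hF' : Differentiable ℂ (deriv F) := Complex.analyticOnNhd_univ_iff_differentiable.1 hFa.deriv

lemma hF'' : Differentiable ℂ (deriv (deriv F)) :=
  Complex.analyticOnNhd_univ_iff_differentiable.1 hFa.deriv.deriv

lemma gamma_shift (m : ℕ) (z : ℂ) (hz : ∀ k : ℕ, z ≠ -k) :
    Complex.Gamma (z + m) = (∏ k ∈ Finset.range m, (z + k)) * Complex.Gamma z := by
  induction m with
  | zero => simp
  | succ m ih =>
    have h0 : z + m ≠ 0 := by
      intro h
      exact hz m (by linear_combination h)
    have h1 : (z + ((m : ℕ) + 1 : ℕ) : ℂ) = (z + m) + 1 := by push_cast; ring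
    rw [h1, Complex.Gamma_add_one _ h0, ih, Finset.prod_range_succ]
    ring

lemma prod_range_add_one (n : ℕ) : ∏ j ∈ Finset.range n, (j + 1) = n.factorial := by
  induction n with
  | zero => simp
  | succ n ih => rw [Finset.prod_range_succ, ih, Nat.factorial_succ]; ring

lemma prod_sub_eq_factorial (n : ℕ) : ∏ k ∈ Finset.range n, (n - k) = n.factorial := by
  have h := Finset.prod_range_reflect (fun j => j + 1) n
  have h3 : ∀ j ∈ Finset.range n, (n - 1 - j + 1) = n - j := by
    intro j hj
    have := Finset.mem_range.1 hj
    omega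
  rw [Finset.prod_congr rfl h3] at h
  rw [h, prod_range_add_one]

lemma prod_eval (n : ℕ) :
    (∏ k ∈ Finset.range n, ((-(n : ℂ)) + k)) = (-1) ^ n * n.factorial := by
  have h1 : ∀ k ∈ Finset.range n, ((-(n : ℂ)) + k) = (-1) * ((n - k : ℕ) : ℂ) := by
    intro k hk
    have hk' : k ≤ n := le_of_lt (Finset.mem_range.1 hk)
    push_cast [Nat.cast_sub hk']
    ring
  rw [Finset.prod_congr rfl h1, Finset.prod_mul_distrib, Finset.prod_const,
    Finset.card_range, ← Nat.cast_prod]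
  congr 1
  exact_mod_cast congrArg (Nat.cast (R := ℂ)) (prod_sub_eq_factorial n)

lemma mem_ball_ne (n : ℕ) {z : ℂ} (hb : z ∈ Metric.ball (-(n : ℂ)) 1)
    (hne : z ≠ -(n : ℂ)) : ∀ m : ℕ, z ≠ -m := by
  intro m h
  subst h
  have hmn : m ≠ n := by
    intro e; exact hne (by rw [e])
  have hd : dist (-(m : ℂ)) (-(n : ℂ)) < 1 := Metric.mem_ball.1 hb
  rw [Complex.dist_eq] at hd
  have he : (-(m : ℂ)) - (-(n : ℂ)) = (((n : ℝ) - m : ℝ) : ℂ) := by push_cast; ring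
  rw [he, Complex.norm_real, Real.norm_eq_abs] at hd
  have h1 : ((n : ℤ) - m) ≠ 0 := sub_ne_zero.2 (by exact_mod_cast hmn.symm)
  have h2 : (1 : ℤ) ≤ |(n : ℤ) - m| := Int.one_le_abs h1
  have h3 : (1 : ℝ) ≤ |(n : ℝ) - m| := by exact_mod_cast h2
  linarith

lemma one_ne_neg_nat : ∀ m : ℕ, (1 : ℂ) ≠ -m := by
  intro m h
  have h2 := congrArg Complex.re h
  simp only [Complex.one_re, Complex.neg_re, Complex.natCast_re] at h2
  have h3 : (0 : ℝ) ≤ (m : ℝ) := Nat.cast_nonneg m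
  linarith

lemma deriv_F_eq {w : ℂ} (hw : ∀ m : ℕ, w ≠ -m) :
    deriv F w = -(deriv Complex.Gamma w) / Complex.Gamma w ^ 2 :=
  (((Complex.differentiableAt_Gamma w hw).hasDerivAt).inv (Complex.Gamma_ne_zero hw)).deriv

/-- The residue computation: `deriv F (-n) = (-1)^n n!`. -/
lemma deriv_F_neg_nat (n : ℕ) :
    deriv F (-(n : ℂ)) = (-1) ^ n * n.factorial := by
  have hslope : Tendsto (slope F (-(n : ℂ))) (𝓝[≠] (-(n : ℂ))) (𝓝 (deriv F (-(n : ℂ)))) :=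
    hasDerivAt_iff_tendsto_slope.1 (hF _).hasDerivAt
  have hG : Tendsto (fun z : ℂ => (∏ k ∈ Finset.range n, (z + k)) / Complex.Gamma (z + n + 1))
      (𝓝[≠] (-(n : ℂ))) (𝓝 ((-1) ^ n * n.factorial)) := by
    have hc : ContinuousAt (fun z : ℂ => (∏ k ∈ Finset.range n, (z + k)) / Complex.Gamma (z + n + 1))
        (-(n : ℂ)) := by
      apply ContinuousAt.div
      · exact (continuous_finset_prod _ fun k _ => by continuity).continuousAt
      · have h1 : ContinuousAt Complex.Gamma ((-(n : ℂ)) + n + 1) := by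
          have he : ((-(n : ℂ)) + n + 1) = 1 := by ring
          rw [he]
          exact (Complex.differentiableAt_Gamma 1 one_ne_neg_nat).continuousAt
        exact ContinuousAt.comp h1 (by fun_prop)
      · have : ((-(n : ℂ)) + n + 1) = 1 := by ring
        rw [this, Complex.Gamma_one]
        exact one_ne_zero
    have hval : (∏ k ∈ Finset.range n, ((-(n : ℂ)) + k)) / Complex.Gamma ((-(n : ℂ)) + n + 1)
        = (-1) ^ n * n.factorial := by
      have : ((-(n : ℂ)) + n + 1) = 1 := by ring
      rw [this, Complex.Gamma_one, prod_eval, div_one]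
    have h5 := hc.tendsto.mono_left (nhdsWithin_le_nhds (s := {(-(n : ℂ))}ᶜ))
    rwa [hval] at h5
  have hev : ∀ᶠ z in 𝓝[≠] (-(n : ℂ)), slope F (-(n : ℂ)) z
      = (∏ k ∈ Finset.range n, (z + k)) / Complex.Gamma (z + n + 1) := by
    have hball : ∀ᶠ z in 𝓝[≠] (-(n : ℂ)), z ∈ Metric.ball (-(n : ℂ)) 1 :=
      eventually_nhdsWithin_of_eventually_nhds
        (Metric.isOpen_ball.eventually_mem (Metric.mem_ball_self one_pos))
    filter_upwards [hball, self_mem_nhdsWithin] with z hb hne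
    have hne' : z ≠ -(n : ℂ) := hne
    have hz : ∀ m : ℕ, z ≠ -m := mem_ball_ne n hb hne'
    have hzn : z + n ≠ 0 := fun h => hz n (by linear_combination h)
    have hΓ : Complex.Gamma z ≠ 0 := Complex.Gamma_ne_zero hz
    have hΓ' : Complex.Gamma (z + n + 1) ≠ 0 := by
      apply Complex.Gamma_ne_zero
      intro m h
      exact hz (m + n + 1) (by push_cast; linear_combination h)
    have hshift := gamma_shift (n + 1) z hz
    have hsum : (z + ((n : ℕ) + 1 : ℕ) : ℂ) = z + n + 1 := by push_cast; ring
    rw [hsum, Finset.prod_range_succ] at hshift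
    have hF0 : F (-(n : ℂ)) = 0 := by
      simp [F, Complex.Gamma_neg_nat_eq_zero]
    rw [slope_def_field, hF0, sub_zero]
    have hFz : F z = (Complex.Gamma z)⁻¹ := rfl
    rw [hFz]
    rw [div_eq_div_iff (by intro h; exact hne' (by linear_combination h)) hΓ']
    field_simp
    linear_combination hshift
  exact tendsto_nhds_unique (hslope.congr' hev) hG

/-- Key local identity. -/
lemma key (n : ℕ) {z : ℂ} (hb : z ∈ Metric.ball (-(n : ℂ)) 1) (hne : z ≠ -(n : ℂ)) :
    deriv digamma z / (Complex.Gamma z) ^ 2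
      = deriv F z ^ 2 - F z * deriv (deriv F) z := by
  have hz : ∀ m : ℕ, z ≠ -m := mem_ball_ne n hb hne
  have hΓ : Complex.Gamma z ≠ 0 := Complex.Gamma_ne_zero hz
  have hU : ∀ᶠ w in 𝓝 z, w ∈ Metric.ball (-(n : ℂ)) 1 ∩ {(-(n : ℂ))}ᶜ :=
    (Metric.isOpen_ball.inter isOpen_compl_singleton).eventually_mem ⟨hb, hne⟩
  have heq : digamma =ᶠ[𝓝 z] fun w => -(deriv F w * Complex.Gamma w) := by
    filter_upwards [hU] with w ⟨hwb, hwne⟩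
    have hw : ∀ m : ℕ, w ≠ -m := mem_ball_ne n hwb hwne
    have hΓw : Complex.Gamma w ≠ 0 := Complex.Gamma_ne_zero hw
    rw [digamma, deriv_F_eq hw]
    field_simp
  have hd : deriv digamma z = deriv (fun w => -(deriv F w * Complex.Gamma w)) z :=
    heq.deriv_eq
  have hprod : HasDerivAt (fun w => -(deriv F w * Complex.Gamma w))
      (-(deriv (deriv F) z * Complex.Gamma z
        + deriv F z * deriv Complex.Gamma z)) z :=
    (((hF' z).hasDerivAt.mul (Complex.differentiableAt_Gamma z hz).hasDerivAt)).neg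
  rw [hd, hprod.deriv]
  have hΓ' : deriv Complex.Gamma z = -(deriv F z) * Complex.Gamma z ^ 2 := by
    rw [deriv_F_eq hz]; field_simp
  have hFz : F z = (Complex.Gamma z)⁻¹ := rfl
  rw [hΓ', hFz]
  field_simp
  ring

end TrigammaAux

theorem trigamma_div_Gamma_sq_tendsto (n : ℕ) :
    Tendsto (fun z : ℂ => deriv digamma z / (Complex.Gamma z) ^ 2)
      (𝓝[≠] (-(n : ℂ))) (𝓝 ((n.factorial : ℂ) ^ 2)) := by
  open TrigammaAux in
  have hg : Tendsto (fun z : ℂ => deriv F z ^ 2 - F z * deriv (deriv F) z)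
      (𝓝[≠] (-(n : ℂ))) (𝓝 ((n.factorial : ℂ) ^ 2)) := by
    have hc : ContinuousAt (fun z : ℂ => deriv F z ^ 2 - F z * deriv (deriv F) z)
        (-(n : ℂ)) := by
      exact ((hF'.continuous.continuousAt.pow 2).sub
        (hF.continuous.continuousAt.mul hF''.continuous.continuousAt))
    have hval : deriv F (-(n : ℂ)) ^ 2 - F (-(n : ℂ)) * deriv (deriv F) (-(n : ℂ))
        = (n.factorial : ℂ) ^ 2 := by
      have hF0 : F (-(n : ℂ)) = 0 := by simp [F, Complex.Gamma_neg_nat_eq_zero]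
      rw [hF0, deriv_F_neg_nat, zero_mul, sub_zero, mul_pow, ← pow_mul,
        mul_comm n 2, pow_mul, neg_one_sq, one_pow, one_mul]
    have h5 : Tendsto (fun z : ℂ => deriv F z ^ 2 - F z * deriv (deriv F) z)
        (𝓝[≠] (-(n : ℂ)))
        (𝓝 (deriv F (-(n : ℂ)) ^ 2 - F (-(n : ℂ)) * deriv (deriv F) (-(n : ℂ)))) :=
      hc.tendsto.mono_left (nhdsWithin_le_nhds (s := {(-(n : ℂ))}ᶜ))
    rwa [hval] at h5
  apply hg.congr'
  have hball : ∀ᶠ z in 𝓝[≠] (-(n : ℂ)), z ∈ Metric.ball (-(n : ℂ)) 1 :=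
    eventually_nhdsWithin_of_eventually_nhds
      (Metric.isOpen_ball.eventually_mem (Metric.mem_ball_self one_pos))
  filter_upwards [hball, self_mem_nhdsWithin] with z hb hne
  exact (key n hb hne).symm
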